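/- Let f(x) = Σ_{n≥1} (f_n/n!) x^n be a formal power series with f(0) = 0 and define φ(x) = ∫₀^x e^{f(t)} dt. Then φ(x) = x + Σ_{𝐧=(n₁,…,n_s)} (1/(l(𝐧)! · 𝐧!)) · (f_𝐧 / (‖𝐧‖+1)) x^{‖𝐧‖+1}, where the sum is over all nonempty tuples of positive integers, 𝐧! = n₁!⋯n_s!, and f_𝐧 = f_{n₁}⋯f_{n_s}. -/

import Mathlib

open PowerSeries

noncomputable def fcomp (A φ : PowerSeries ℝ) : PowerSeries ℝ :=
  PowerSeries.mk fun N => ∑ k ∈ Finset.range (N + 1), coeff k A * coeff N (φ ^ k)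

noncomputable def flog (Φ : PowerSeries ℝ) : PowerSeries ℝ :=
  PowerSeries.mk fun N => ∑ k ∈ Finset.range (N + 1),
    (-1 : ℝ) ^ k * ((k : ℝ) + 1)⁻¹ * coeff N ((Φ - 1) ^ (k + 1))

noncomputable def fexp (f : PowerSeries ℝ) : PowerSeries ℝ :=
  PowerSeries.mk fun N => ∑ k ∈ Finset.range (N + 1),
    (Nat.factorial k : ℝ)⁻¹ * coeff N (f ^ k)

noncomputable def finteg (g : PowerSeries ℝ) : PowerSeries ℝ :=
  PowerSeries.mk fun N => if N = 0 then 0 else coeff (N - 1) g / (N : ℝ)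

noncomputable def gammaCM (n : ℕ) (φ : PowerSeries ℝ) : ℝ :=
  (Nat.factorial n : ℝ) * coeff n (flog (derivativeFun φ))

def splits {α : Type*} : List α → List (List (List α))
  | [] => [[]]
  | a :: l => (splits l).flatMap fun P =>
      match P with
      | [] => [[[a]]]
      | b :: P' => [[a] :: b :: P', (a :: b) :: P']

def Bcoef (k : ℕ) : List (List ℕ) → ℕ
  | [] => 1
  | [m] => Nat.choose k m.length
  | m :: L => Nat.choose ((L.map List.sum).sum + k) m.length * Bcoef k L

noncomputable def Aval (L : List (List ℕ)) : ℝ :=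
  (L.map fun B => ((Nat.factorial B.length : ℝ) * ((B.sum : ℝ) + 1))⁻¹).prod

noncomputable def alphaval (m : ℕ) (l : List ℕ) : ℝ :=
  ((splits l).map fun L => (Nat.choose m L.length : ℝ) * Aval L).sum

noncomputable def Uval (k : ℕ) (m : List ℕ) : ℝ :=
  ((splits m).map fun P => (-1 : ℝ) ^ (P.length + 1) * (Bcoef k P : ℝ)).sum

noncomputable def betaval : List ℕ → ℝ
  | [] => 0
  | [_] => -1
  | l => ((splits l.dropLast).map fun L =>
      Uval l.getLast! (L.map List.sum) * Aval L).sum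

def shuffles2 {α : Type*} : List α → List α → Multiset (List α)
  | [], l => {l}
  | k, [] => {k}
  | a :: k, b :: l =>
      ((shuffles2 k (b :: l)).map (a :: ·)) + ((shuffles2 (a :: k) l).map (b :: ·))
termination_by k l => k.length + l.length

def shc : List ℕ → List ℕ → List ℕ → ℕ
  | [], l, m => if l = m then 1 else 0
  | k, [], m => if k = m then 1 else 0
  | a :: k, b :: l, c :: m =>
      (if a = c then shc k (b :: l) m else 0) + (if b = c then shc (a :: k) l m else 0)
  | _ :: _, _ :: _, [] => 0
termination_by k l _ => k.length + l.length

def tailProd : List ℕ → ℕ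
  | [] => 1
  | a :: l => (a + l.sum) * tailProd l

def tp1 : List ℕ → ℕ
  | [] => 1
  | a :: l => (a + l.sum + 1) * tp1 l

def tpk (k : ℕ) : List ℕ → ℕ
  | [] => 1
  | a :: l => (a + l.sum + k) * tpk k l

def Qm (l : List ℕ) : ℕ := (l.getLast! + 1) * tailProd l.tail

noncomputable def Mval (u : ℕ → ℝ) (l : List ℕ) : ℝ :=
  ((-1 : ℝ) ^ l.length * (l.map u).prod) / (tailProd l : ℝ)

noncomputable def Bop (n : ℕ) (A : PowerSeries ℝ) : PowerSeries ℝ :=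
  X ^ (n + 1) * derivativeFun A


section KeyAux
open Finset
lemma comp_getD_ne {n : ℕ} (c : Composition n) :
    ∀ a, (fun i => c.blocks.getD i 0) a ≠ 0 → a ∈ range c.length := by
  intro a ha
  rw [mem_range]
  by_contra hlt
  push_neg at hlt
  simp only at ha
  rw [List.getD_eq_default _ _ (by simpa [Composition.blocks_length] using hlt)] at ha
  exact ha rfl

noncomputable def compFinsupp {n : ℕ} (c : Composition n) : ℕ →₀ ℕ :=
  Finsupp.onFinset (range c.length) (fun i => c.blocks.getD i 0) (comp_getD_ne c)

lemma compFinsupp_apply {n : ℕ} (c : Composition n) (i : ℕ) :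
    compFinsupp c i = c.blocks.getD i 0 := rfl

lemma compFinsupp_map {n : ℕ} (c : Composition n) :
    (List.range c.length).map (compFinsupp c) = c.blocks := by
  apply List.ext_getElem
  · simp [Composition.blocks_length]
  · intro i h1 h2
    simp only [List.getElem_map, List.getElem_range, compFinsupp_apply]
    rw [List.getD_eq_getElem]

lemma key (f : PowerSeries ℝ) (hf : coeff 0 f = 0) (k N : ℕ) :
    coeff N (f ^ k) =
      ∑ c ∈ Finset.univ.filter (fun c : Composition N => c.length = k),
        (c.blocks.map fun i => coeff i f).prod := by
  rw [coeff_pow]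
  rw [← Finset.sum_filter_add_sum_filter_not _ (fun l => ∀ i ∈ range k, l i ≠ 0)]
  have h2 : ∑ l ∈ (finsuppAntidiag (range k) N).filter
      (fun l => ¬ ∀ i ∈ range k, l i ≠ 0), ∏ i ∈ range k, coeff (l i) f = 0 := by
    apply Finset.sum_eq_zero
    intro l hl
    simp only [mem_filter, not_forall] at hl
    obtain ⟨i, hi, hli⟩ := hl.2
    simp only [ne_eq, not_not] at hli
    exact Finset.prod_eq_zero hi (by rw [hli, hf])
  rw [h2, add_zero]
  refine Finset.sum_bij' (i := fun l hl => (⟨(List.range k).map l, ?_, ?_⟩ : Composition N))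
    (j := fun c _ => compFinsupp c) ?_ ?_ ?_ ?_ ?_
  · -- blocks positive
    intro b hb
    simp only [List.mem_map, List.mem_range] at hb
    obtain ⟨i, hik, rfl⟩ := hb
    simp only [mem_filter, mem_finsuppAntidiag] at hl
    exact Nat.pos_of_ne_zero (hl.2 i (mem_range.mpr hik))
  · -- blocks sum
    simp only [mem_filter, mem_finsuppAntidiag] at hl
    exact hl.1.1
  · -- i maps into filter
    intro l hl
    simp only [mem_filter, mem_univ, true_and, Composition.length]
    simp [List.length_map]
  · -- j maps into filter
    intro c hc
    simp only [mem_filter, mem_univ, true_and] at hc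
    simp only [mem_filter, mem_finsuppAntidiag]
    refine ⟨⟨?_, ?_⟩, ?_⟩
    · calc (range k).sum ⇑(compFinsupp c)
          = ((List.range k).map (compFinsupp c)).sum := rfl
        _ = N := by rw [← hc, compFinsupp_map, c.blocks_sum]
    · refine Finsupp.support_onFinset_subset.trans ?_
      rw [hc]
    · intro i hi
      rw [mem_range] at hi
      rw [compFinsupp_apply]
      have hik' : i < c.blocks.length := by rw [Composition.blocks_length, hc]; exact hi
      rw [List.getD_eq_getElem _ _ hik']
      have := c.blocks_pos (List.getElem_mem hik')
      omega
  · -- left inverse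
    intro l hl
    simp only [mem_filter, mem_finsuppAntidiag] at hl
    ext i
    rw [compFinsupp_apply]
    by_cases hik : i < k
    · rw [List.getD_eq_getElem _ _ (by simpa using hik)]
      simp only [List.getElem_map, List.getElem_range]
    · rw [List.getD_eq_default _ _ (by simpa using hik)]
      by_contra h
      have : i ∈ l.support := Finsupp.mem_support_iff.mpr (Ne.symm h)
      exact hik (mem_range.mp (hl.1.2 this))
  · -- right inverse
    intro c hc
    simp only [mem_filter, mem_univ, true_and] at hc
    apply Composition.ext
    show (List.range k).map (compFinsupp c) = c.blocks
    rw [← hc, compFinsupp_map]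
  · -- values agree
    intro l hl
    simp only [List.map_map]
    rfl

end KeyAux

open Finset in
/-- Expansion of `φ(x) = ∫₀ˣ e^{f(t)} dt` in terms of `f_n = n! · coeff n f`. -/
theorem stmt6 (f : PowerSeries ℝ) (hf : coeff 0 f = 0)
    (φ : PowerSeries ℝ) (hφ : φ = finteg (fexp f)) :
    coeff 0 φ = 0 ∧ coeff 1 φ = 1 ∧ ∀ N : ℕ, 1 ≤ N →
      coeff (N + 1) φ =
        ∑ c : Composition N,
          ((Nat.factorial c.length : ℝ) * ((c.blocks.map Nat.factorial).prod : ℝ))⁻¹ *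
            ((c.blocks.map fun i => (Nat.factorial i : ℝ) * coeff i f).prod /
              ((N : ℝ) + 1)) := by
  subst hφ
  refine ⟨by simp [finteg], ?_, ?_⟩
  · simp [finteg, fexp, coeff_mk]
  · intro N hN
    rw [finteg, coeff_mk, if_neg (by omega)]
    have hred : coeff (N + 1 - 1) (fexp f) = ∑ k ∈ Finset.range (N + 1),
        (Nat.factorial k : ℝ)⁻¹ * coeff N (f ^ k) := by
      simp [fexp, coeff_mk]
    rw [hred]
    -- simplify RHS terms
    have hterm : ∀ c : Composition N,
        ((Nat.factorial c.length : ℝ) * ((c.blocks.map Nat.factorial).prod : ℝ))⁻¹ *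
          ((c.blocks.map fun i => (Nat.factorial i : ℝ) * coeff i f).prod /
            ((N : ℝ) + 1)) =
        (Nat.factorial c.length : ℝ)⁻¹ *
          ((c.blocks.map fun i => coeff i f).prod / ((N : ℝ) + 1)) := by
      intro c
      have hsplit : (c.blocks.map fun i => (Nat.factorial i : ℝ) * coeff i f).prod =
          (c.blocks.map fun i => (Nat.factorial i : ℝ)).prod *
            (c.blocks.map fun i => coeff i f).prod := by
        rw [← List.prod_map_mul]
      have hcast : ((c.blocks.map Nat.factorial).prod : ℝ) =
          (c.blocks.map fun i => (Nat.factorial i : ℝ)).prod := by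
        rw [Nat.cast_list_prod, List.map_map]
        rfl
      have hne : (c.blocks.map fun i => (Nat.factorial i : ℝ)).prod ≠ 0 := by
        apply List.prod_ne_zero
        intro h0
        simp only [List.mem_map] at h0
        obtain ⟨i, _, hi⟩ := h0
        exact (Nat.cast_pos.mpr (Nat.factorial_pos i)).ne' hi
      rw [hsplit, hcast, mul_inv]
      field_simp
    rw [Finset.sum_congr rfl (fun c _ => hterm c)]
    -- fiberwise
    rw [← Finset.sum_fiberwise_of_maps_to (g := fun c : Composition N => c.length)
      (t := Finset.range (N + 1)) (fun c _ => Finset.mem_range.mpr (Nat.lt_succ_of_le c.length_le))]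
    rw [Finset.sum_div]
    apply Finset.sum_congr rfl
    intro k _
    rw [key f hf k N, Finset.mul_sum, Finset.sum_div]
    apply Finset.sum_congr rfl
    intro c hc
    simp only [Finset.mem_filter] at hc
    rw [hc.2]
    push_cast
    ring
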